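/- Let V' be a set of nodes, w a fixed node, and f_v(w) ∈ (0, 1/log^4 n] probabilities. Partition V' into sets V'(i) = {v ∈ V' : f_v(w) ∈ (1/log^{5+i} n, 1/log^{4+i} n]} for i ≥ 0. If Σ_{v∈V'} f_v(w) > ε/(2 log n), then there exists j < log n/log log n with |V'(j)| > log^j n. -/

import Mathlib

set_option maxHeartbeats 1000000


open Finset Real

/-- for sufficiently large `n`, if `V'` (of size at most `n`) carries
probabilities `g v ∈ (0, 1/log^4 n]` summing to more than `ε/(2 log n)`, then some class
`V'(j) = {v : g v ∈ (1/log^{5+j} n, 1/log^{4+j} n]}` with `j < log n/log log n` has size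
greater than `log^j n`. -/
theorem stmt3 (ε : ℝ) (hε : 0 < ε) :
    ∃ N : ℕ, ∀ n : ℕ, N ≤ n →
    ∀ (V : Type) (V' : Finset V) (g : V → ℝ),
      V'.card ≤ n →
      (∀ v ∈ V', 0 < g v ∧ g v ≤ 1 / (Real.log n) ^ 4) →
      ε / (2 * Real.log n) < ∑ v ∈ V', g v →
      ∃ j : ℕ, (j : ℝ) < Real.log n / Real.log (Real.log n) ∧
        (Real.log n) ^ j <
          ((V'.filter fun v =>
              1 / (Real.log n) ^ (5 + j) < g v ∧ g v ≤ 1 / (Real.log n) ^ (4 + j)).card : ℝ) := by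
  classical
  set C : ℝ := max (Real.exp 2) (2 / ε) with hC
  refine ⟨⌈Real.exp C⌉₊, fun n hn V V' g hcard hg hsum => ?_⟩
  have hn0 : (0:ℝ) < n := by
    have h1 : 0 < ⌈Real.exp C⌉₊ := Nat.ceil_pos.2 (Real.exp_pos C)
    exact_mod_cast lt_of_lt_of_le h1 hn
  have hCn : Real.exp C ≤ (n:ℝ) := Nat.ceil_le.1 hn
  set L := Real.log n with hLdef
  have hCL : C ≤ L := (Real.le_log_iff_exp_le hn0).2 hCn
  have hL2 : Real.exp 2 ≤ L := le_trans (le_max_left _ _) hCL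
  have hLε : 2 / ε ≤ L := le_trans (le_max_right _ _) hCL
  have hL1 : 1 < L := lt_of_lt_of_le (by
    have := Real.exp_lt_exp.2 (show (0:ℝ) < 2 by norm_num)
    simpa using this) hL2
  have hL0 : 0 < L := lt_trans one_pos hL1
  set LL := Real.log L with hLLdef
  have hLL2 : 2 ≤ LL := by
    have := Real.log_le_log (Real.exp_pos 2) hL2
    simpa using this
  have hLL0 : 0 < LL := lt_of_lt_of_le (by norm_num) hLL2
  by_contra hcon
  push_neg at hcon
  -- class function
  have hex : ∀ v ∈ V', ∃ j : ℕ, 1 / L ^ (5 + j) < g v := by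
    intro v hv
    obtain ⟨j, hj⟩ := pow_unbounded_of_one_lt (1 / g v) hL1
    have hgv := (hg v hv).1
    refine ⟨j, ?_⟩
    have hpj : (0:ℝ) < L ^ j := pow_pos hL0 j
    have h1 : 1 / L ^ j < g v := by
      rw [div_lt_iff₀ hgv] at hj
      rw [div_lt_iff₀ hpj]
      nlinarith
    have h2 : L ^ j ≤ L ^ (5 + j) := pow_le_pow_right₀ hL1.le (by omega)
    calc 1 / L ^ (5 + j) ≤ 1 / L ^ j := by
          apply one_div_le_one_div_of_le hpj h2
      _ < g v := h1
  set J : V → ℕ := fun v => if h : ∃ j : ℕ, 1 / L ^ (5 + j) < g v then Nat.find h else 0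
    with hJdef
  have hJeq : ∀ (v : V) (hv : v ∈ V'), J v = Nat.find (hex v hv) := fun v hv => dif_pos (hex v hv)
  have hJspec : ∀ v ∈ V', 1 / L ^ (5 + J v) < g v := by
    intro v hv
    rw [hJeq v hv]
    exact Nat.find_spec (hex v hv)
  have hJup : ∀ v ∈ V', g v ≤ 1 / L ^ (4 + J v) := by
    intro v hv
    rcases Nat.eq_zero_or_pos (J v) with h0 | hpos
    · rw [h0]
      simpa using (hg v hv).2
    · obtain ⟨m, hm⟩ := Nat.exists_eq_add_of_lt hpos
      have hJv := hJeq v hv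
      have hmlt : m < Nat.find (hex v hv) := by rw [← hJv]; omega
      have hmin : ¬ (1 / L ^ (5 + m) < g v) := Nat.find_min (hex v hv) hmlt
      push_neg at hmin
      have h45 : 4 + J v = 5 + m := by omega
      rw [h45]
      exact hmin
  set M : ℕ := ⌈L / LL⌉₊ with hM
  -- the statement's classes
  set S : ℕ → Finset V := fun j => V'.filter fun v =>
      1 / L ^ (5 + j) < g v ∧ g v ≤ 1 / L ^ (4 + j) with hS
  have hmemS : ∀ v ∈ V', v ∈ S (J v) := by
    intro v hv
    simp only [hS, mem_filter]
    exact ⟨hv, hJspec v hv, hJup v hv⟩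
  have hconS : ∀ j : ℕ, j < M → ((S j).card : ℝ) ≤ L ^ j := by
    intro j hj
    have hjr : (j:ℝ) < L / LL := (Nat.lt_ceil).1 hj
    exact hcon j hjr
  -- bound on sum over the tail
  have hLLne : LL ≠ 0 := ne_of_gt hLL0
  have hrpow : L ^ (L / LL) = (n:ℝ) := by
    rw [Real.rpow_def_of_pos hL0, ← hLLdef]
    have : LL * (L / LL) = L := by field_simp
    rw [this, hLdef, Real.exp_log hn0]
  have htail : ∀ v ∈ V', M ≤ J v → g v ≤ 1 / (L ^ 4 * n) := by
    intro v hv hMv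
    have h1 : L / LL ≤ (J v : ℝ) := le_trans (Nat.le_ceil _) (by exact_mod_cast hMv)
    have h2 : (n:ℝ) ≤ L ^ (J v) := by
      rw [← hrpow, ← Real.rpow_natCast L (J v)]
      exact Real.rpow_le_rpow_left_iff hL1 |>.2 h1
    have h3 := hJup v hv
    have h4 : L ^ 4 * (n:ℝ) ≤ L ^ (4 + J v) := by
      rw [pow_add]
      have : (0:ℝ) < L ^ 4 := pow_pos hL0 4
      nlinarith
    calc g v ≤ 1 / L ^ (4 + J v) := h3
      _ ≤ 1 / (L ^ 4 * n) := by
          apply one_div_le_one_div_of_le (by positivity) h4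
  -- split the sum
  have hsplit := Finset.sum_filter_add_sum_filter_not V' (fun v => J v < M) g
  set A := V'.filter (fun v => J v < M) with hA
  set B := V'.filter (fun v => ¬ J v < M) with hB
  have hBsum : ∑ v ∈ B, g v ≤ 1 / L ^ 4 := by
    have h1 : ∑ v ∈ B, g v ≤ (B.card : ℝ) * (1 / (L ^ 4 * n)) := by
      rw [← nsmul_eq_mul]
      apply Finset.sum_le_card_nsmul
      intro v hv
      rw [hB, mem_filter] at hv
      exact htail v hv.1 (by omega)
    have h2 : (B.card : ℝ) ≤ (n:ℝ) := by
      have : B.card ≤ V'.card := Finset.card_le_card (Finset.filter_subset _ _)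
      exact_mod_cast le_trans this hcard
    have h3 : (0:ℝ) < L ^ 4 * n := by positivity
    calc ∑ v ∈ B, g v ≤ (B.card : ℝ) * (1 / (L ^ 4 * n)) := h1
      _ ≤ (n:ℝ) * (1 / (L ^ 4 * n)) := by
          apply mul_le_mul_of_nonneg_right h2 (by positivity)
      _ = 1 / L ^ 4 := by field_simp
  have hAsum : ∑ v ∈ A, g v ≤ (M : ℝ) * (1 / L ^ 4) := by
    have hfib : ∑ j ∈ Finset.range M, ∑ v ∈ A.filter (fun v => J v = j), g v
        = ∑ v ∈ A, g v := by
      apply Finset.sum_fiberwise_of_maps_to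
      intro v hv
      rw [hA, mem_filter] at hv
      exact Finset.mem_range.2 hv.2
    rw [← hfib]
    calc ∑ j ∈ Finset.range M, ∑ v ∈ A.filter (fun v => J v = j), g v
        ≤ ∑ j ∈ Finset.range M, (1 / L ^ 4) := by
          apply Finset.sum_le_sum
          intro j hj
          have hjM : j < M := Finset.mem_range.1 hj
          have hsub : A.filter (fun v => J v = j) ⊆ S j := by
            intro v hv
            rw [mem_filter, hA, mem_filter] at hv
            have hv' := hv.1.1
            have := hmemS v hv'
            rwa [hv.2] at this
          have hcards : ((A.filter (fun v => J v = j)).card : ℝ) ≤ L ^ j :=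
            le_trans (by exact_mod_cast Finset.card_le_card hsub) (hconS j hjM)
          have hbound : ∑ v ∈ A.filter (fun v => J v = j), g v
              ≤ ((A.filter (fun v => J v = j)).card : ℝ) * (1 / L ^ (4 + j)) := by
            rw [← nsmul_eq_mul]
            apply Finset.sum_le_card_nsmul
            intro v hv
            rw [mem_filter, hA, mem_filter] at hv
            have := hJup v hv.1.1
            rwa [hv.2] at this
          calc ∑ v ∈ A.filter (fun v => J v = j), g v
              ≤ ((A.filter (fun v => J v = j)).card : ℝ) * (1 / L ^ (4 + j)) := hbound
            _ ≤ L ^ j * (1 / L ^ (4 + j)) := by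
                apply mul_le_mul_of_nonneg_right hcards (by positivity)
            _ = 1 / L ^ 4 := by
                rw [pow_add]
                field_simp
      _ = (M : ℝ) * (1 / L ^ 4) := by
          rw [Finset.sum_const, Finset.card_range, nsmul_eq_mul]
  -- assemble contradiction
  have htotal : ∑ v ∈ V', g v ≤ ((M : ℝ) + 1) * (1 / L ^ 4) := by
    rw [← hsplit]
    have := add_le_add hAsum hBsum
    linarith
  have hMle : (M : ℝ) < L / LL + 1 := by
    have := Nat.ceil_lt_add_one (le_of_lt (div_pos hL0 hLL0))
    exact_mod_cast this
  have hLL_half : L / LL ≤ L / 2 := by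
    apply div_le_div_of_nonneg_left hL0.le (by norm_num) hLL2
  have hL4 : (4:ℝ) ≤ L := by
    have he : Real.exp 2 = Real.exp 1 * Real.exp 1 := by
      rw [← Real.exp_add]; norm_num
    have hd := Real.exp_one_gt_d9
    nlinarith
  have hεL : 2 / L ≤ ε := by
    rw [div_le_iff₀ hL0]
    rw [div_le_iff₀ hε] at hLε
    nlinarith
  have hfinal : ε / (2 * L) < 1 / L ^ 3 := by
    calc ε / (2 * L) < ((M : ℝ) + 1) * (1 / L ^ 4) := lt_of_lt_of_le hsum htotal
      _ ≤ L * (1 / L ^ 4) := by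
          apply mul_le_mul_of_nonneg_right _ (by positivity)
          nlinarith
      _ = 1 / L ^ 3 := by
          field_simp
  rw [div_lt_div_iff₀ (by positivity) (by positivity)] at hfinal
  have h1 : 2 * L ^ 2 ≤ ε * L ^ 3 := by
    have h2 := mul_le_mul_of_nonneg_right hεL (le_of_lt (pow_pos hL0 3))
    calc 2 * L ^ 2 = (2 / L) * L ^ 3 := by field_simp
      _ ≤ ε * L ^ 3 := h2
  nlinarith [hfinal, h1, hL1, hL0]
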